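/- arXiv:0808.0135 — 2 statements merged into one kernel-verified Lean document; each statement's English description precedes it below -/
import Mathlib

section
/- Suppose a solution component has the representation φ(x,λ) = e^{iaλx} + ∫₀ˣ K₁₁(x,t) e^{iaλt} dt + ∫₀ˣ K₁₂(x,t) e^{ibλt} dt with K₁₁, K₁₂ bounded measurable on the triangle {0 ≤ t ≤ x ≤ 1} and a < 0 < b. Then there is a constant C such that for all λ with Im λ > 0 and all x ∈ [0,1], |φ(x,λ) − e^{iaλx}| ≤ (C / Im λ)·|e^{iaλx}|. -/
open Complex MeasureTheory Set

lemma int_exp_mul (c x : ℝ) (hc : c ≠ 0) :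
    ∫ t in (0:ℝ)..x, Real.exp (c*t) = (Real.exp (c*x) - 1)/c := by
  have h : ∀ t ∈ Set.uIcc (0:ℝ) x,
      HasDerivAt (fun t => Real.exp (c*t)/c) (Real.exp (c*t)) t := by
    intro t _
    have := ((Real.hasDerivAt_exp (c*t)).comp t
      ((hasDerivAt_id t).const_mul c)).div_const c
    simpa [mul_comm, mul_div_assoc, mul_div_cancel_left₀ _ hc] using this
  have hint : IntervalIntegrable (fun t => Real.exp (c*t)) volume 0 x :=
    (Real.continuous_exp.comp (continuous_const.mul continuous_id)).intervalIntegrable _ _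
  rw [intervalIntegral.integral_eq_sub_of_hasDerivAt h hint]
  simp [sub_div]

lemma norm_int_le (f : ℝ → ℂ) (M c x : ℝ) (hx : 0 ≤ x)
    (hbd : ∀ t, 0 ≤ t → t ≤ x → ‖f t‖ ≤ M * Real.exp (c*t)) :
    ‖∫ t in (0:ℝ)..x, f t‖ ≤ |∫ t in (0:ℝ)..x, M * Real.exp (c*t)| := by
  apply intervalIntegral.norm_integral_le_abs_of_norm_le
  · apply ae_restrict_of_forall_mem measurableSet_uIoc
    intro t ht
    rw [Set.uIoc_of_le hx] at ht
    exact hbd t ht.1.le ht.2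
  · exact ((continuous_const.mul (Real.continuous_exp.comp
      (continuous_const.mul continuous_id))).intervalIntegrable _ _)

lemma re_calc (a t : ℝ) (lam : ℂ) : (Complex.I * (a:ℂ) * lam * (t:ℂ)).re = -(a*lam.im)*t := by
  simp [Complex.mul_re, Complex.mul_im]

/-- If `φ(x,λ) = e^{iaλx} + ∫₀ˣ K₁₁(x,t) e^{iaλt} dt + ∫₀ˣ K₁₂(x,t) e^{ibλt} dt`
with bounded measurable kernels on the triangle and `a < 0 < b`, then there is `C` such that
for all `λ` with `Im λ > 0` and `x ∈ [0,1]`,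
`|φ(x,λ) − e^{iaλx}| ≤ (C / Im λ)·|e^{iaλx}|`. -/
theorem stmt2 (φ : ℝ → ℂ → ℂ) (K₁₁ K₁₂ : ℝ → ℝ → ℂ) (a b : ℝ) (ha : a < 0) (hb : 0 < b)
    (hmeas₁ : Measurable (fun p : ℝ × ℝ => K₁₁ p.1 p.2))
    (hmeas₂ : Measurable (fun p : ℝ × ℝ => K₁₂ p.1 p.2))
    (M : ℝ) (hM₁ : ∀ x t : ℝ, 0 ≤ t → t ≤ x → x ≤ 1 → ‖K₁₁ x t‖ ≤ M)
    (hM₂ : ∀ x t : ℝ, 0 ≤ t → t ≤ x → x ≤ 1 → ‖K₁₂ x t‖ ≤ M)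
    (hrep : ∀ x ∈ Icc (0:ℝ) 1, ∀ lam : ℂ,
      φ x lam = Complex.exp (Complex.I * a * lam * x)
        + (∫ t in (0:ℝ)..x, K₁₁ x t * Complex.exp (Complex.I * a * lam * t))
        + (∫ t in (0:ℝ)..x, K₁₂ x t * Complex.exp (Complex.I * b * lam * t))) :
    ∃ C : ℝ, 0 < C ∧ ∀ lam : ℂ, 0 < lam.im → ∀ x ∈ Icc (0:ℝ) 1,
      ‖φ x lam - Complex.exp (Complex.I * a * lam * x)‖
        ≤ C / lam.im * ‖Complex.exp (Complex.I * a * lam * x)‖ := by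
  have hM0 : 0 ≤ M := le_trans (norm_nonneg _) (hM₁ 0 0 le_rfl le_rfl zero_le_one)
  have hna : 0 < -a := by linarith
  have hC : 0 < (M+1)*(1/(-a)+1/b) := by
    apply mul_pos (by linarith)
    exact add_pos (one_div_pos.2 hna) (one_div_pos.2 hb)
  refine ⟨(M+1)*(1/(-a)+1/b), hC, ?_⟩
  intro lam hs x hx
  obtain ⟨hx0, hx1⟩ := hx
  set s := lam.im with hsdef
  set c₁ : ℝ := -(a*s) with hc₁
  set c₂ : ℝ := -(b*s) with hc₂
  have hc₁pos : 0 < c₁ := by simp only [hc₁]; nlinarith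
  have hc₂neg : c₂ < 0 := by simp only [hc₂]; nlinarith
  have hnea : ∀ t : ℝ, ‖Complex.exp (Complex.I * a * lam * t)‖ = Real.exp (c₁ * t) := by
    intro t; rw [Complex.norm_exp, re_calc]
  have hneb : ∀ t : ℝ, ‖Complex.exp (Complex.I * b * lam * t)‖ = Real.exp (c₂ * t) := by
    intro t; rw [Complex.norm_exp, re_calc]
  have h1 : ‖∫ t in (0:ℝ)..x, K₁₁ x t * Complex.exp (Complex.I * a * lam * t)‖
      ≤ |∫ t in (0:ℝ)..x, M * Real.exp (c₁*t)| := by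
    apply norm_int_le _ M c₁ x hx0
    intro t ht0 htx
    rw [norm_mul, hnea]
    exact mul_le_mul_of_nonneg_right (hM₁ x t ht0 htx hx1) (Real.exp_nonneg _)
  have h2 : ‖∫ t in (0:ℝ)..x, K₁₂ x t * Complex.exp (Complex.I * b * lam * t)‖
      ≤ |∫ t in (0:ℝ)..x, M * Real.exp (c₂*t)| := by
    apply norm_int_le _ M c₂ x hx0
    intro t ht0 htx
    rw [norm_mul, hneb]
    exact mul_le_mul_of_nonneg_right (hM₂ x t ht0 htx hx1) (Real.exp_nonneg _)
  have hi1 : ∫ t in (0:ℝ)..x, M * Real.exp (c₁*t) = M * ((Real.exp (c₁*x) - 1)/c₁) := by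
    rw [intervalIntegral.integral_const_mul, int_exp_mul c₁ x hc₁pos.ne']
  have hi2 : ∫ t in (0:ℝ)..x, M * Real.exp (c₂*t) = M * ((Real.exp (c₂*x) - 1)/c₂) := by
    rw [intervalIntegral.integral_const_mul, int_exp_mul c₂ x hc₂neg.ne]
  have hE1 : (1:ℝ) ≤ Real.exp (c₁*x) := by
    rw [← Real.exp_zero]; exact Real.exp_le_exp.2 (by positivity)
  have hE2 : Real.exp (c₂*x) ≤ 1 := by
    rw [← Real.exp_zero]; exact Real.exp_le_exp.2 (by nlinarith)
  have hb1 : |∫ t in (0:ℝ)..x, M * Real.exp (c₁*t)| ≤ M / c₁ * Real.exp (c₁*x) := by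
    rw [hi1, _root_.abs_of_nonneg (mul_nonneg hM0 (div_nonneg (by linarith) hc₁pos.le))]
    calc M * ((Real.exp (c₁*x) - 1)/c₁) ≤ M * (Real.exp (c₁*x)/c₁) := by
          gcongr; linarith
      _ = M / c₁ * Real.exp (c₁*x) := by ring
  have hb2 : |∫ t in (0:ℝ)..x, M * Real.exp (c₂*t)| ≤ M / (-c₂) * Real.exp (c₁*x) := by
    rw [hi2]
    have heq : M * ((Real.exp (c₂*x) - 1)/c₂) = M * ((1 - Real.exp (c₂*x))/(-c₂)) := by
      ring
    rw [heq, _root_.abs_of_nonneg (mul_nonneg hM0 (div_nonneg (by linarith) (by linarith)))]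
    calc M * ((1 - Real.exp (c₂*x))/(-c₂)) ≤ M * (1/(-c₂)) :=
          mul_le_mul_of_nonneg_left
            ((div_le_div_iff_of_pos_right (by linarith : (0:ℝ) < -c₂)).2 (by linarith [Real.exp_nonneg (c₂*x)])) hM0
      _ = M / (-c₂) := by ring
      _ ≤ M / (-c₂) * Real.exp (c₁*x) :=
          le_mul_of_one_le_right (div_nonneg hM0 (by linarith)) hE1
  have hcoef : M/c₁ + M/(-c₂) ≤ (M+1)*(1/(-a)+1/b)/s := by
    have he1 : M/c₁ + M/(-c₂) = (M/(-a) + M/b)/s := by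
      have ha0 : a ≠ 0 := ha.ne
      have hb0 : b ≠ 0 := hb.ne'
      have hs0 : s ≠ 0 := hs.ne'
      rw [hc₁, hc₂]
      field_simp
    rw [he1]
    apply (div_le_div_iff_of_pos_right hs).2
    have he2 : (M+1)*(1/(-a)+1/b) = (M+1)/(-a)+(M+1)/b := by ring
    rw [he2]
    exact add_le_add ((div_le_div_iff_of_pos_right hna).2 (by linarith))
      ((div_le_div_iff_of_pos_right hb).2 (by linarith))
  rw [hrep x ⟨hx0, hx1⟩ lam]
  have hsplit : Complex.exp (Complex.I * a * lam * x)
        + (∫ t in (0:ℝ)..x, K₁₁ x t * Complex.exp (Complex.I * a * lam * t))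
        + (∫ t in (0:ℝ)..x, K₁₂ x t * Complex.exp (Complex.I * b * lam * t))
        - Complex.exp (Complex.I * a * lam * x)
      = (∫ t in (0:ℝ)..x, K₁₁ x t * Complex.exp (Complex.I * a * lam * t))
        + (∫ t in (0:ℝ)..x, K₁₂ x t * Complex.exp (Complex.I * b * lam * t)) := by
    ring
  rw [hsplit, hnea x]
  calc ‖(∫ t in (0:ℝ)..x, K₁₁ x t * Complex.exp (Complex.I * a * lam * t))
        + (∫ t in (0:ℝ)..x, K₁₂ x t * Complex.exp (Complex.I * b * lam * t))‖
      ≤ ‖(∫ t in (0:ℝ)..x, K₁₁ x t * Complex.exp (Complex.I * a * lam * t))‖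
        + ‖(∫ t in (0:ℝ)..x, K₁₂ x t * Complex.exp (Complex.I * b * lam * t))‖ :=
        norm_add_le _ _
    _ ≤ M / c₁ * Real.exp (c₁*x) + M / (-c₂) * Real.exp (c₁*x) :=
        add_le_add (h1.trans hb1) (h2.trans hb2)
    _ = (M/c₁ + M/(-c₂)) * Real.exp (c₁*x) := by ring
    _ ≤ (M+1)*(1/(-a)+1/b)/s * Real.exp (c₁*x) :=
        mul_le_mul_of_nonneg_right hcoef (Real.exp_nonneg _)
end

section
/- Let H be a Hilbert space, let {φₙ}ₙ∈ℤ be a Riesz basis of H, and let {ψₙ}ₙ∈ℤ be a complete system in H such that Σₙ ‖ψₙ − φₙ‖² < ∞. Then {ψₙ}ₙ∈ℤ is a Riesz basis of H. -/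
open Submodule

section BariAux

set_option linter.unusedSectionVars false

/-- Cauchy–Schwarz inequality for infinite sums of nonnegative reals. -/
lemma bari_tsum_cs {f g : ℤ → ℝ} (hf0 : ∀ n, 0 ≤ f n) (hg0 : ∀ n, 0 ≤ g n)
    (hf : Summable fun n => f n ^ 2) (hg : Summable fun n => g n ^ 2) :
    Summable (fun n => f n * g n) ∧
      ∑' n, f n * g n ≤ Real.sqrt (∑' n, f n ^ 2) * Real.sqrt (∑' n, g n ^ 2) := by
  have hsm : Summable (fun n => f n * g n) := by
    apply Summable.of_nonneg_of_le (fun n => mul_nonneg (hf0 n) (hg0 n))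
      (fun n => ?_) ((hf.add hg).div_const 2)
    have := sq_nonneg (f n - g n)
    nlinarith
  refine ⟨hsm, ?_⟩
  apply Summable.tsum_le_of_sum_le hsm
  intro s
  have h1 : (∑ n ∈ s, f n * g n) ^ 2 ≤ (∑ n ∈ s, f n ^ 2) * ∑ n ∈ s, g n ^ 2 :=
    Finset.sum_mul_sq_le_sq_mul_sq s f g
  have h2 : ∑ n ∈ s, f n ^ 2 ≤ ∑' n, f n ^ 2 := Summable.sum_le_tsum s (fun n _ => sq_nonneg _) hf
  have h3 : ∑ n ∈ s, g n ^ 2 ≤ ∑' n, g n ^ 2 := Summable.sum_le_tsum s (fun n _ => sq_nonneg _) hg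
  rcases le_or_gt (∑ n ∈ s, f n * g n) 0 with h|h
  · exact h.trans (mul_nonneg (Real.sqrt_nonneg _) (Real.sqrt_nonneg _))
  rw [← Real.sqrt_mul (tsum_nonneg (fun n => sq_nonneg (f n)))]
  rw [Real.le_sqrt h.le]
  calc (∑ n ∈ s, f n * g n) ^ 2 ≤ (∑ n ∈ s, f n ^ 2) * ∑ n ∈ s, g n ^ 2 := h1
    _ ≤ (∑' n, f n ^ 2) * ∑' n, g n ^ 2 := by
        apply mul_le_mul h2 h3 (Finset.sum_nonneg (fun n _ => sq_nonneg _))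
          (tsum_nonneg (fun n => sq_nonneg (f n)))
  · exact mul_nonneg (tsum_nonneg fun n => sq_nonneg _) (tsum_nonneg fun n => sq_nonneg _)

variable {H : Type*} [NormedAddCommGroup H] [InnerProductSpace ℂ H] [CompleteSpace H]

/-- The coefficients of `x` in a Hilbert basis are square-summable with sum `‖x‖ ^ 2`. -/
lemma bari_repr_sq (e : HilbertBasis ℤ ℂ H) (x : H) :
    Summable (fun n => ‖e.repr x n‖ ^ 2) ∧ ∑' n, ‖e.repr x n‖ ^ 2 = ‖x‖ ^ 2 := by
  have h2 : (0:ℝ) < (2 : ENNReal).toReal := by norm_num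
  have hs := (lp.memℓp (e.repr x)).summable h2
  have heq : ∀ (r:ℝ), r ^ (2:ENNReal).toReal = r ^ 2 := by
    intro r
    rw [show (2:ENNReal).toReal = ((2:ℕ):ℝ) by norm_num, Real.rpow_natCast]
  have hn := lp.norm_rpow_eq_tsum h2 (e.repr x)
  simp only [heq] at hs hn
  refine ⟨hs, ?_⟩
  rw [← hn, e.repr.norm_map]

/-- Construction of the bounded operator `x ↦ ∑ₙ ⟨eₙ, x⟩ dₙ` given a square-summable
family `d`, together with a norm bound. -/
lemma bari_exists_clm (e : HilbertBasis ℤ ℂ H) (d : ℤ → H) {C : ℝ} (hC : 0 ≤ C)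
    (hd : Summable fun n => ‖d n‖ ^ 2) (hC2 : ∑' n, ‖d n‖ ^ 2 ≤ C ^ 2) :
    ∃ K : H →L[ℂ] H, (∀ x, K x = ∑' n, e.repr x n • d n) ∧ (∀ x, ‖K x‖ ≤ C * ‖x‖) ∧
      (∀ x, Summable fun n => e.repr x n • d n) := by
  have hnorm : ∀ x : H, Summable (fun n => ‖e.repr x n • d n‖) := by
    intro x
    have := (bari_tsum_cs (f := fun n => ‖e.repr x n‖) (g := fun n => ‖d n‖)
      (fun n => norm_nonneg _) (fun n => norm_nonneg _) (bari_repr_sq e x).1 hd).1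
    simpa [norm_smul] using this
  have hsm : ∀ x : H, Summable (fun n => e.repr x n • d n) := fun x => (hnorm x).of_norm
  have hbound : ∀ x : H, ‖∑' n, e.repr x n • d n‖ ≤ C * ‖x‖ := by
    intro x
    calc ‖∑' n, e.repr x n • d n‖ ≤ ∑' n, ‖e.repr x n • d n‖ :=
          norm_tsum_le_tsum_norm (hnorm x)
      _ = ∑' n, ‖e.repr x n‖ * ‖d n‖ := by simp [norm_smul]
      _ ≤ Real.sqrt (∑' n, ‖e.repr x n‖ ^ 2) * Real.sqrt (∑' n, ‖d n‖ ^ 2) :=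
          (bari_tsum_cs (fun n => norm_nonneg _) (fun n => norm_nonneg _)
            (bari_repr_sq e x).1 hd).2
      _ ≤ ‖x‖ * C := by
          rw [(bari_repr_sq e x).2, Real.sqrt_sq (norm_nonneg x)]
          exact mul_le_mul_of_nonneg_left
            (by rw [← Real.sqrt_sq hC]; exact Real.sqrt_le_sqrt hC2) (norm_nonneg x)
      _ = C * ‖x‖ := mul_comm _ _
  refine ⟨LinearMap.mkContinuous
    { toFun := fun x => ∑' n, e.repr x n • d n
      map_add' := ?_
      map_smul' := ?_ } C ?_, fun x => rfl, ?_, hsm⟩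
  · intro x y
    simp only [map_add, lp.coeFn_add, Pi.add_apply, add_smul]
    exact Summable.tsum_add (hsm x) (hsm y)
  · intro c x
    simp only [map_smul, lp.coeFn_smul, Pi.smul_apply, smul_eq_mul, mul_smul, RingHom.id_apply]
    exact ((hsm x).hasSum.const_smul c).tsum_eq
  · exact hbound
  · intro x
    exact hbound x

/-- If `F` has finite-dimensional range and `1 + F` has dense range, then `1 + F`
is bijective. -/
lemma bari_bij_one_add (F : H →L[ℂ] H) (hfin : FiniteDimensional ℂ (LinearMap.range (F : H →ₗ[ℂ] H)))
    (hdense : Dense (LinearMap.range ((1 + F : H →L[ℂ] H) : H →ₗ[ℂ] H) : Set H)) :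
    Function.Bijective (1 + F : H →L[ℂ] H) := by
  set T : H →L[ℂ] H := 1 + F with hT
  have hTapp : ∀ x, T x = x + F x := fun x => by
    simp [hT, ContinuousLinearMap.add_apply]
  set W := LinearMap.range (F : H →ₗ[ℂ] H) with hW
  haveI : FiniteDimensional ℂ W := hfin
  have hFW : ∀ x, F x ∈ W := fun x => LinearMap.mem_range_self _ x
  have hTW : ∀ x ∈ (W : Submodule ℂ H), (T : H →ₗ[ℂ] H) x ∈ W := by
    intro x hx
    rw [ContinuousLinearMap.coe_coe, hTapp]
    exact W.add_mem hx (hFW x)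
  set G : W →ₗ[ℂ] W := (T : H →ₗ[ℂ] H).restrict hTW with hG
  have hGapp : ∀ (w : W), (G w : H) = T w := fun w => rfl
  have key : ∀ y : H, y ∈ LinearMap.range (T : H →ₗ[ℂ] H) ↔ F y ∈ (LinearMap.range G).map W.subtype := by
    intro y
    constructor
    · rintro ⟨x, rfl⟩
      refine ⟨G ⟨F x, hFW x⟩, ⟨_, rfl⟩, ?_⟩
      rw [coe_subtype, hGapp]
      rw [ContinuousLinearMap.coe_coe, hTapp, hTapp, map_add]
    · rintro ⟨w, ⟨w', rfl⟩, hw⟩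
      refine ⟨y - (w' : H), ?_⟩
      rw [ContinuousLinearMap.coe_coe, hTapp]
      have : F (y - (w' : H)) = F y - F (w' : H) := map_sub _ _ _
      rw [this]
      rw [coe_subtype, hGapp, hTapp] at hw
      rw [← hw]
      abel
  have hclosed : IsClosed (LinearMap.range (T : H →ₗ[ℂ] H) : Set H) := by
    have h1 : (LinearMap.range (T : H →ₗ[ℂ] H) : Set H) = F ⁻¹' ((LinearMap.range G).map W.subtype : Set H) := by
      ext y; exact key y
    rw [h1]
    exact (Submodule.closed_of_finiteDimensional _).preimage F.continuous
  have hsurj : Function.Surjective T := by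
    have huniv : (LinearMap.range (T : H →ₗ[ℂ] H) : Set H) = Set.univ := by
      rw [← hclosed.closure_eq]
      exact hdense.closure_eq
    intro y
    have : y ∈ (LinearMap.range (T : H →ₗ[ℂ] H) : Set H) := huniv ▸ Set.mem_univ y
    exact this
  have hGsurj : Function.Surjective G := by
    rintro ⟨v, hv⟩
    obtain ⟨x, hx⟩ := hsurj v
    have hxW : x ∈ W := by
      have : x = v - F x := by rw [← hx, hTapp]; abel
      rw [this]
      exact W.sub_mem hv (hFW x)
    exact ⟨⟨x, hxW⟩, Subtype.ext (by rw [hGapp]; exact hx)⟩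
  have hGinj : Function.Injective G :=
    (LinearMap.injective_iff_surjective (f := G)).mpr hGsurj
  have hinj : Function.Injective T := by
    intro x y hxy
    have h0 : T (x - y) = 0 := by rw [map_sub, hxy, sub_self]
    have hmem : x - y ∈ W := by
      have : x - y = -(F (x - y)) := by
        have := hTapp (x - y)
        rw [h0] at this
        linear_combination (norm := abel) -this
      rw [this]; exact W.neg_mem (hFW _)
    have hz : G ⟨x - y, hmem⟩ = 0 := Subtype.ext (by rw [hGapp]; exact h0)
    have := hGinj (a₁ := ⟨x - y, hmem⟩) (a₂ := 0) (by rw [hz, map_zero])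
    have hxy0 : x - y = 0 := congrArg Subtype.val this
    exact sub_eq_zero.mp hxy0
  exact ⟨hinj, hsurj⟩

end BariAux

/-- A system `ψ` indexed by `ℤ` is a Riesz basis of the Hilbert space `H` if some bounded
invertible operator (with bounded inverse) `A` on `H` maps it to an orthonormal basis. -/
def IsRieszBasis {H : Type*} [NormedAddCommGroup H] [InnerProductSpace ℂ H]
    (ψ : ℤ → H) : Prop :=
  ∃ A : H ≃L[ℂ] H, Orthonormal ℂ (fun n => A (ψ n)) ∧
    (Submodule.span ℂ (Set.range fun n => A (ψ n))).topologicalClosure = ⊤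

/-- Bari's theorem: if `{φₙ}` is a Riesz basis of `H`, `{ψₙ}` is complete in
`H` and `Σₙ ‖ψₙ − φₙ‖² < ∞`, then `{ψₙ}` is a Riesz basis of `H`. -/
theorem stmt8 {H : Type*} [NormedAddCommGroup H] [InnerProductSpace ℂ H] [CompleteSpace H]
    (φ ψ : ℤ → H) (hφ : IsRieszBasis φ)
    (hcomplete : (Submodule.span ℂ (Set.range ψ)).topologicalClosure = ⊤)
    (hsum : Summable fun n : ℤ => ‖ψ n - φ n‖ ^ 2) :
    IsRieszBasis ψ := by
  classical
  obtain ⟨A, hON, hspan⟩ := hφ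
  set e : HilbertBasis ℤ ℂ H := HilbertBasis.mk hON hspan.ge with he_def
  have he : ∀ n, e n = A (φ n) := fun n =>
    congrFun (HilbertBasis.coe_mk hON hspan.ge) n
  set d : ℤ → H := fun n => A (ψ n) - e n with hd_def
  have hdsum : Summable fun n => ‖d n‖ ^ 2 := by
    apply Summable.of_nonneg_of_le (fun n => sq_nonneg _) (fun n => ?_)
      (hsum.mul_left (‖(A : H →L[ℂ] H)‖ ^ 2))
    have hdn : d n = A (ψ n - φ n) := by
      simp only [hd_def, he n, map_sub]
    rw [hdn]
    have h1 : ‖(A : H →L[ℂ] H) (ψ n - φ n)‖ ≤ ‖(A : H →L[ℂ] H)‖ * ‖ψ n - φ n‖ :=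
      (A : H →L[ℂ] H).le_opNorm _
    have h2 : (0:ℝ) ≤ ‖ψ n - φ n‖ := norm_nonneg _
    have h3 : (0:ℝ) ≤ ‖(A : H →L[ℂ] H)‖ := norm_nonneg _
    have h4 : ‖(A : H →L[ℂ] H) (ψ n - φ n)‖ = ‖A (ψ n - φ n)‖ := rfl
    nlinarith [norm_nonneg (A (ψ n - φ n))]
  -- choose a finite set outside which the tail is small
  obtain ⟨s, hs⟩ : ∃ s : Finset ℤ, ∑' n, ‖(if n ∈ s then 0 else d n)‖ ^ 2 < 1 := by
    have hL := hdsum.hasSum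
    have hev : ∀ᶠ t in Filter.atTop,
        (∑' n, ‖d n‖ ^ 2) - 1 < ∑ n ∈ t, ‖d n‖ ^ 2 :=
      hL.eventually (eventually_gt_nhds (by linarith))
    obtain ⟨s, hs⟩ := hev.exists
    refine ⟨s, ?_⟩
    have hsplit : Summable fun n => ‖(if n ∈ s then 0 else d n)‖ ^ 2 := by
      apply Summable.of_nonneg_of_le (fun n => sq_nonneg _) (fun n => ?_) hdsum
      by_cases h : n ∈ s <;> simp [h, sq_nonneg]
    have hone : (fun n => ‖d n‖ ^ 2) = (fun n => ‖(if n ∈ s then 0 else d n)‖ ^ 2)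
        + (fun n => if n ∈ s then ‖d n‖ ^ 2 else 0) := by
      funext n
      by_cases h : n ∈ s <;> simp [h]
    have hfin : Summable (fun n => if n ∈ s then ‖d n‖ ^ 2 else 0) :=
      summable_of_ne_finset_zero (s := s) (fun n hn => if_neg hn)
    have hts : ∑' n, (if n ∈ s then ‖d n‖ ^ 2 else 0) = ∑ n ∈ s, ‖d n‖ ^ 2 := by
      rw [tsum_eq_sum (s := s) (fun n hn => if_neg hn)]
      exact Finset.sum_congr rfl (fun n hn => if_pos hn)
    have hkey : ∑' n, ‖d n‖ ^ 2
        = (∑' n, ‖(if n ∈ s then 0 else d n)‖ ^ 2) + ∑ n ∈ s, ‖d n‖ ^ 2 := by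
      rw [← hts, hone]
      exact Summable.tsum_add hsplit hfin
    linarith
  set d' : ℤ → H := fun n => if n ∈ s then 0 else d n with hd'_def
  have hd'sum : Summable fun n => ‖d' n‖ ^ 2 := by
    apply Summable.of_nonneg_of_le (fun n => sq_nonneg _) (fun n => ?_) hdsum
    by_cases h : n ∈ s <;> simp [hd'_def, h, sq_nonneg]
  have hd'nonneg : (0:ℝ) ≤ ∑' n, ‖d' n‖ ^ 2 := tsum_nonneg (fun n => sq_nonneg _)
  have hdnonneg : (0:ℝ) ≤ ∑' n, ‖d n‖ ^ 2 := tsum_nonneg (fun n => sq_nonneg _)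
  -- the two operators
  obtain ⟨K, hK, -, hKsm⟩ := bari_exists_clm e d (Real.sqrt_nonneg (∑' n, ‖d n‖ ^ 2)) hdsum
    (le_of_eq (Real.sq_sqrt hdnonneg).symm)
  obtain ⟨Kt, hKt, hKtb, hKtsm⟩ := bari_exists_clm e d' (Real.sqrt_nonneg (∑' n, ‖d' n‖ ^ 2))
    hd'sum (le_of_eq (Real.sq_sqrt hd'nonneg).symm)
  have hKtnorm : ‖Kt‖ < 1 := by
    have h1 : ‖Kt‖ ≤ Real.sqrt (∑' n, ‖d' n‖ ^ 2) :=
      Kt.opNorm_le_bound (Real.sqrt_nonneg _) hKtb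
    have h2 : Real.sqrt (∑' n, ‖d' n‖ ^ 2) < 1 := by
      rw [show (1:ℝ) = Real.sqrt 1 by simp]
      exact Real.sqrt_lt_sqrt hd'nonneg hs
    linarith
  -- S = 1 + K and its action on the basis
  set S : H →L[ℂ] H := 1 + K with hS_def
  have hK_basis : ∀ m, K (e m) = d m := by
    intro m
    rw [hK]
    have hr : e.repr (e m) = lp.single 2 m 1 := e.repr_self m
    rw [hr]
    rw [tsum_eq_single m (fun n hn => by
      rw [lp.single_apply_ne 2 m _ hn, zero_smul])]
    rw [lp.single_apply_self, one_smul]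
  have hS_basis : ∀ m, S (e m) = A (ψ m) := by
    intro m
    simp only [hS_def, ContinuousLinearMap.add_apply, ContinuousLinearMap.one_apply,
      hK_basis m, hd_def]
    abel
  -- S has dense range
  have hSdense : Dense (LinearMap.range (S : H →ₗ[ℂ] H) : Set H) := by
    have hdense1 : Dense (span ℂ (Set.range fun n => A (ψ n)) : Set H) := by
      have h1 : Dense (span ℂ (Set.range ψ) : Set H) :=
        Submodule.dense_iff_topologicalClosure_eq_top.mpr hcomplete
      have h2 : Dense ((A : H → H) '' (span ℂ (Set.range ψ) : Set H)) :=
        A.toHomeomorph.surjective.denseRange.dense_image A.continuous h1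
      have h3 : (A : H → H) '' (span ℂ (Set.range ψ) : Set H)
          = ((span ℂ (Set.range ψ)).map (A : H →ₗ[ℂ] H) : Set H) := rfl
      have h4 : (span ℂ (Set.range ψ)).map (A : H →ₗ[ℂ] H)
          = span ℂ (Set.range fun n => A (ψ n)) := by
        rw [Submodule.map_span]
        congr 1
        rw [← Set.range_comp]
        rfl
      rw [h3, h4] at h2
      exact h2
    have hsub : span ℂ (Set.range fun n => A (ψ n)) ≤ LinearMap.range (S : H →ₗ[ℂ] H) := by
      rw [Submodule.span_le]
      rintro - ⟨m, rfl⟩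
      exact ⟨e m, hS_basis m⟩
    exact hdense1.mono hsub
  -- invertible part
  set u : (H →L[ℂ] H)ˣ := Units.oneSub (-Kt) (by rwa [norm_neg]) with hu_def
  have huval : (u : H →L[ℂ] H) = 1 + Kt := by
    simp [hu_def, Units.oneSub, sub_neg_eq_add]
  have huu : ∀ y, (↑u : H →L[ℂ] H) ((↑u⁻¹ : H →L[ℂ] H) y) = y := by
    intro y
    calc (↑u : H →L[ℂ] H) ((↑u⁻¹ : H →L[ℂ] H) y)
        = (↑u * ↑u⁻¹ : H →L[ℂ] H) y := rfl
      _ = (1 : H →L[ℂ] H) y := by rw [u.mul_inv]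
      _ = y := rfl
  have huu' : ∀ y, (↑u⁻¹ : H →L[ℂ] H) ((↑u : H →L[ℂ] H) y) = y := by
    intro y
    calc (↑u⁻¹ : H →L[ℂ] H) ((↑u : H →L[ℂ] H) y)
        = (↑u⁻¹ * ↑u : H →L[ℂ] H) y := rfl
      _ = (1 : H →L[ℂ] H) y := by rw [u.inv_mul]
      _ = y := rfl
  -- finite rank part
  set Kf : H →L[ℂ] H := K - Kt with hKf_def
  have hKf_apply : ∀ x, Kf x = ∑ n ∈ s, e.repr x n • d n := by
    intro x
    have h1 : Kf x = K x - Kt x := rfl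
    rw [h1, hK, hKt, ← Summable.tsum_sub (hKsm x) (hKtsm x)]
    have h2 : (fun n => e.repr x n • d n - e.repr x n • d' n)
        = fun n => if n ∈ s then e.repr x n • d n else 0 := by
      funext n
      by_cases h : n ∈ s <;> simp [hd'_def, h]
    rw [h2, tsum_eq_sum (s := s) (fun n hn => if_neg hn)]
    exact Finset.sum_congr rfl (fun n hn => if_pos hn)
  have hKf_range : LinearMap.range (Kf : H →ₗ[ℂ] H) ≤ span ℂ (↑(s.image d) : Set H) := by
    rintro - ⟨x, rfl⟩
    rw [ContinuousLinearMap.coe_coe, hKf_apply]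
    apply Submodule.sum_mem
    intro n hn
    exact Submodule.smul_mem _ _ (Submodule.subset_span (Finset.mem_coe.mpr
      (Finset.mem_image_of_mem d hn)))
  haveI hKf_fin : FiniteDimensional ℂ (LinearMap.range (Kf : H →ₗ[ℂ] H)) :=
    Submodule.finiteDimensional_of_le hKf_range
  -- F = u⁻¹ * Kf
  set F : H →L[ℂ] H := (↑u⁻¹ : H →L[ℂ] H).comp Kf with hF_def
  haveI hF_fin : FiniteDimensional ℂ (LinearMap.range (F : H →ₗ[ℂ] H)) := by
    haveI : FiniteDimensional ℂ
        ((LinearMap.range (Kf : H →ₗ[ℂ] H)).map ((↑u⁻¹ : H →L[ℂ] H) : H →ₗ[ℂ] H)) :=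
      Module.Finite.map _ _
    apply Submodule.finiteDimensional_of_le
      (S₂ := (LinearMap.range (Kf : H →ₗ[ℂ] H)).map ((↑u⁻¹ : H →L[ℂ] H) : H →ₗ[ℂ] H))
    rintro - ⟨x, rfl⟩
    exact ⟨Kf x, LinearMap.mem_range_self _ x, rfl⟩
  have hfact : S = (↑u : H →L[ℂ] H).comp (1 + F) := by
    ext x
    show S x = (↑u : H →L[ℂ] H) ((1 + F) x)
    have h3 : (1 + F : H →L[ℂ] H) x = x + F x := rfl
    have h4 : F x = (↑u⁻¹ : H →L[ℂ] H) (Kf x) := rfl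
    rw [h3, map_add, h4, huu (Kf x)]
    have h2 : (↑u : H →L[ℂ] H) x = x + Kt x := by
      rw [huval]; rfl
    rw [h2]
    show x + K x = x + Kt x + (K - Kt) x
    rw [ContinuousLinearMap.sub_apply]
    abel
  -- 1 + F has dense range
  have hTdense : Dense (LinearMap.range ((1 + F : H →L[ℂ] H) : H →ₗ[ℂ] H) : Set H) := by
    have hinvcont : Continuous (↑u⁻¹ : H →L[ℂ] H) := (↑u⁻¹ : H →L[ℂ] H).continuous
    have hsurjinv : Function.Surjective (↑u⁻¹ : H →L[ℂ] H) := by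
      intro y
      exact ⟨(↑u : H →L[ℂ] H) y, huu' y⟩
    have h2 : Dense ((↑u⁻¹ : H →L[ℂ] H) '' (LinearMap.range (S : H →ₗ[ℂ] H) : Set H)) :=
      hsurjinv.denseRange.dense_image hinvcont hSdense
    apply h2.mono
    rintro - ⟨-, ⟨x, rfl⟩, rfl⟩
    refine ⟨x, ?_⟩
    rw [hfact]
    exact (huu' ((1 + F) x)).symm
  have hTbij : Function.Bijective (1 + F : H →L[ℂ] H) := bari_bij_one_add F hF_fin hTdense
  have hSbij : Function.Bijective S := by
    rw [hfact]
    exact (Equiv.bijective (ContinuousLinearEquiv.ofUnit u).toEquiv).comp hTbij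
  -- upgrade to a continuous linear equivalence
  set S' : H ≃L[ℂ] H := ContinuousLinearEquiv.ofBijective S
    (LinearMap.ker_eq_bot.mpr hSbij.injective)
    (LinearMap.range_eq_top.mpr hSbij.surjective) with hS'_def
  have hS'app : ∀ x, S' x = S x := fun x => rfl
  refine ⟨A.trans S'.symm, ?_, ?_⟩
  · have hcoe : (fun n => (A.trans S'.symm) (ψ n)) = ⇑e := by
      funext n
      show S'.symm (A (ψ n)) = e n
      rw [ContinuousLinearEquiv.symm_apply_eq, hS'app, hS_basis]
    rw [hcoe]
    exact e.orthonormal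
  · have hcoe : (fun n => (A.trans S'.symm) (ψ n)) = ⇑e := by
      funext n
      show S'.symm (A (ψ n)) = e n
      rw [ContinuousLinearEquiv.symm_apply_eq, hS'app, hS_basis]
    rw [hcoe]
    exact e.dense_span
end
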